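/- Let K, L be convex bodies in ℝ³ containing the origin in their interiors, and let μ be the surface area measure of K. Then lim_{t → +∞} F(t) = 0, where F(t) = (1/3) ∫_{S²} log((h_L(u) + t h_K(u)) / h_K(u)) h_K(u) dμ(u) − V(K) · log( (V(L + tK)/V(K))^{1/3} ) for t ≥ 0 and L + tK denotes the Minkowski sum. -/

import Mathlib

open scoped Pointwise RealInnerProductSpace
open MeasureTheory Metric

noncomputable section

/-- The support function `h_K(u) = sup_{x ∈ K} ⟨x, u⟩` of a set `K ⊆ ℝ³`. -/
def supp (K : Set (EuclideanSpace ℝ (Fin 3))) (u : EuclideanSpace ℝ (Fin 3)) : ℝ :=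
  sSup ((fun x => ⟪x, u⟫) '' K)

/-- `r_o(K,L) = min_{u ∈ S²} h_K(u)/h_L(u)`. -/
def rIn (K L : Set (EuclideanSpace ℝ (Fin 3))) : ℝ :=
  sInf ((fun u => supp K u / supp L u) '' sphere (0 : EuclideanSpace ℝ (Fin 3)) 1)

/-- `R_o(K,L) = max_{u ∈ S²} h_K(u)/h_L(u)`. -/
def rOut (K L : Set (EuclideanSpace ℝ (Fin 3))) : ℝ :=
  sSup ((fun u => supp K u / supp L u) '' sphere (0 : EuclideanSpace ℝ (Fin 3)) 1)

lemma bddAbove_img {K : Set (EuclideanSpace ℝ (Fin 3))} {R : ℝ}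
    (hR : ∀ x ∈ K, ‖x‖ ≤ R) (u : EuclideanSpace ℝ (Fin 3)) :
    BddAbove ((fun x => ⟪x, u⟫) '' K) := by
  refine ⟨R * ‖u‖, ?_⟩
  rintro y ⟨x, hx, rfl⟩
  calc ⟪x, u⟫ ≤ ‖x‖ * ‖u‖ := real_inner_le_norm x u
  _ ≤ R * ‖u‖ := mul_le_mul_of_nonneg_right (hR x hx) (norm_nonneg u)

lemma le_supp_of_mem {K : Set (EuclideanSpace ℝ (Fin 3))} {R : ℝ}
    (hR : ∀ x ∈ K, ‖x‖ ≤ R) {x u : EuclideanSpace ℝ (Fin 3)}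
    (hx : x ∈ K) : ⟪x, u⟫ ≤ supp K u :=
  le_csSup (bddAbove_img hR u) ⟨x, hx, rfl⟩

lemma supp_le {K : Set (EuclideanSpace ℝ (Fin 3))} {R : ℝ}
    (hR : ∀ x ∈ K, ‖x‖ ≤ R) {u : EuclideanSpace ℝ (Fin 3)} (hu : ‖u‖ = 1)
    (hne : K.Nonempty) : supp K u ≤ R := by
  apply csSup_le (hne.image _)
  rintro y ⟨x, hx, rfl⟩
  calc ⟪x, u⟫ ≤ ‖x‖ * ‖u‖ := real_inner_le_norm x u
  _ ≤ R := by rw [hu, mul_one]; exact hR x hx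

lemma le_supp {K : Set (EuclideanSpace ℝ (Fin 3))} {r : ℝ} (hr : 0 < r)
    (hball : ball (0 : EuclideanSpace ℝ (Fin 3)) r ⊆ K)
    {R : ℝ} (hR : ∀ x ∈ K, ‖x‖ ≤ R) {u : EuclideanSpace ℝ (Fin 3)} (hu : ‖u‖ = 1) :
    r / 2 ≤ supp K u := by
  have hmem : (r/2) • u ∈ K := by
    apply hball
    rw [mem_ball, dist_eq_norm, sub_zero, norm_smul, hu, mul_one, Real.norm_eq_abs,
      abs_of_pos (by positivity : (0:ℝ) < r/2)]
    linarith
  have h1 : ⟪(r/2) • u, u⟫ = r/2 := by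
    rw [real_inner_smul_left, real_inner_self_eq_norm_sq, hu]; ring
  rw [← h1]
  exact le_supp_of_mem hR hmem

lemma supp_lipschitz {K : Set (EuclideanSpace ℝ (Fin 3))} {R : ℝ} (hR0 : 0 ≤ R)
    (hR : ∀ x ∈ K, ‖x‖ ≤ R)
    (hne : K.Nonempty) : LipschitzWith (Real.toNNReal R) (supp K) := by
  have key : ∀ u v : EuclideanSpace ℝ (Fin 3), supp K u ≤ supp K v + R * ‖u - v‖ := by
    intro u v
    apply csSup_le (hne.image _)
    rintro y ⟨x, hx, rfl⟩
    have h1 : ⟪x, u⟫ = ⟪x, v⟫ + ⟪x, u - v⟫ := by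
      rw [← inner_add_right]; congr 1; abel
    have h2 : ⟪x, v⟫ ≤ supp K v := le_supp_of_mem hR hx
    have h3 : ⟪x, u - v⟫ ≤ R * ‖u - v‖ := by
      calc ⟪x, u-v⟫ ≤ ‖x‖ * ‖u-v‖ := real_inner_le_norm _ _
      _ ≤ R * ‖u-v‖ := mul_le_mul_of_nonneg_right (hR x hx) (norm_nonneg _)
    show ⟪x, u⟫ ≤ supp K v + R * ‖u - v‖
    linarith
  apply LipschitzWith.of_le_add_mul
  intro u v
  calc supp K u ≤ supp K v + R * ‖u - v‖ := key u v
  _ = supp K v + ↑(Real.toNNReal R) * dist u v := by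
      rw [Real.coe_toNNReal R hR0, dist_eq_norm]

set_option maxHeartbeats 1000000 in
/-- For convex bodies `K, L ⊆ ℝ³` containing the origin in their interiors, the
function `F(t) = (1/3)∫_{S²} log((h_L + t h_K)/h_K) h_K dS_K − V(K) log((V(L+tK)/V(K))^{1/3})`
tends to `0` as `t → +∞`. -/
theorem limit_of_F_at_top
    (K L : Set (EuclideanSpace ℝ (Fin 3)))
    (hKc : IsCompact K) (hKconv : Convex ℝ K) (hKint : (interior K).Nonempty)
    (hLc : IsCompact L) (hLconv : Convex ℝ L) (hLint : (interior L).Nonempty)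
    (hK0 : (0 : EuclideanSpace ℝ (Fin 3)) ∈ interior K)
    (hL0 : (0 : EuclideanSpace ℝ (Fin 3)) ∈ interior L)
    (μ : Measure (sphere (0 : EuclideanSpace ℝ (Fin 3)) 1)) (hμfin : IsFiniteMeasure μ)
    (hμ : ∀ M : Set (EuclideanSpace ℝ (Fin 3)),
      IsCompact M → Convex ℝ M → (interior M).Nonempty →
        Filter.Tendsto
          (fun t : ℝ => ((volume (K + t • M)).toReal - (volume K).toReal) / t)
          (nhdsWithin 0 (Set.Ioi 0))
          (nhds (∫ u : sphere (0 : EuclideanSpace ℝ (Fin 3)) 1, supp M u ∂μ)))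
    :
    Filter.Tendsto
      (fun t : ℝ =>
        (1 / 3) * (∫ u : sphere (0 : EuclideanSpace ℝ (Fin 3)) 1,
            Real.log ((supp L u + t * supp K u) / supp K u) * supp K u ∂μ)
          - (volume K).toReal *
              Real.log (((volume (L + t • K)).toReal / (volume K).toReal) ^ ((1 : ℝ) / 3)))
      Filter.atTop (nhds 0) := by
  -- Boundedness and interior-ball data
  obtain ⟨RK', hRK'⟩ := hKc.isBounded.exists_norm_le
  set RK : ℝ := max RK' 0 with hRKdef
  have hRK : ∀ x ∈ K, ‖x‖ ≤ RK := fun x hx => (hRK' x hx).trans (le_max_left _ _)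
  have hRK0 : 0 ≤ RK := le_max_right _ _
  obtain ⟨RL', hRL'⟩ := hLc.isBounded.exists_norm_le
  set RL : ℝ := max RL' 0 with hRLdef
  have hRL : ∀ x ∈ L, ‖x‖ ≤ RL := fun x hx => (hRL' x hx).trans (le_max_left _ _)
  have hRL0 : 0 ≤ RL := le_max_right _ _
  obtain ⟨rK, hrK, hballK⟩ : ∃ r > 0, ball (0 : EuclideanSpace ℝ (Fin 3)) r ⊆ K := by
    have h := hK0
    rw [mem_interior_iff_mem_nhds, Metric.mem_nhds_iff] at h
    obtain ⟨r, hr, h⟩ := h; exact ⟨r, hr, h⟩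
  obtain ⟨rL, hrL, hballL⟩ : ∃ r > 0, ball (0 : EuclideanSpace ℝ (Fin 3)) r ⊆ L := by
    have h := hL0
    rw [mem_interior_iff_mem_nhds, Metric.mem_nhds_iff] at h
    obtain ⟨r, hr, h⟩ := h; exact ⟨r, hr, h⟩
  have hKne : K.Nonempty := ⟨0, interior_subset hK0⟩
  have hLne : L.Nonempty := ⟨0, interior_subset hL0⟩
  -- pointwise bounds on the sphere
  have hKub : ∀ u : sphere (0 : EuclideanSpace ℝ (Fin 3)) 1, supp K ↑u ≤ RK :=
    fun u => supp_le hRK (norm_eq_of_mem_sphere u) hKne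
  have hLub : ∀ u : sphere (0 : EuclideanSpace ℝ (Fin 3)) 1, supp L ↑u ≤ RL :=
    fun u => supp_le hRL (norm_eq_of_mem_sphere u) hLne
  have hKpos : ∀ u : sphere (0 : EuclideanSpace ℝ (Fin 3)) 1, 0 < supp K ↑u :=
    fun u => lt_of_lt_of_le (by positivity) (le_supp hrK hballK hRK (norm_eq_of_mem_sphere u))
  have hLpos : ∀ u : sphere (0 : EuclideanSpace ℝ (Fin 3)) 1, 0 < supp L ↑u :=
    fun u => lt_of_lt_of_le (by positivity) (le_supp hrL hballL hRL (norm_eq_of_mem_sphere u))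
  -- continuity on the sphere
  have hcK : Continuous (fun u : sphere (0 : EuclideanSpace ℝ (Fin 3)) 1 => supp K ↑u) :=
    ((supp_lipschitz hRK0 hRK hKne).continuous).comp continuous_subtype_val
  have hcL : Continuous (fun u : sphere (0 : EuclideanSpace ℝ (Fin 3)) 1 => supp L ↑u) :=
    ((supp_lipschitz hRL0 hRL hLne).continuous).comp continuous_subtype_val
  have hintK : Integrable (fun u : sphere (0 : EuclideanSpace ℝ (Fin 3)) 1 => supp K ↑u) μ :=
    hcK.integrable_of_hasCompactSupport (HasCompactSupport.of_compactSpace _)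
  -- the volume of K
  set V : ℝ := (volume K).toReal with hVdef
  have hVpos : 0 < V := by
    apply ENNReal.toReal_pos
    · exact ((isOpen_interior.measure_pos volume hKint).trans_le
        (measure_mono interior_subset)).ne'
    · exact hKc.measure_lt_top.ne
  -- `∫ h_K dμ = 3 V(K)`
  have hIK : (∫ u : sphere (0 : EuclideanSpace ℝ (Fin 3)) 1, supp K ↑u ∂μ) = 3 * V := by
    have h1 := hμ K hKc hKconv hKint
    have h2 : Filter.Tendsto (fun t : ℝ => ((volume (K + t • K)).toReal - V) / t)
        (nhdsWithin 0 (Set.Ioi 0)) (nhds (3 * V)) := by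
      have heq : ∀ᶠ t in nhdsWithin (0:ℝ) (Set.Ioi 0),
          (3 + 3*t + t^2) * V = ((volume (K + t • K)).toReal - V) / t := by
        filter_upwards [self_mem_nhdsWithin] with t ht
        have ht : (0:ℝ) < t := ht
        have hsum : (1+t) • K = K + t • K := by
          rw [hKconv.add_smul (by norm_num) ht.le, one_smul]
        rw [← hsum, Measure.addHaar_smul, finrank_euclideanSpace_fin, abs_pow,
          abs_of_pos (by linarith : (0:ℝ) < 1+t), ENNReal.toReal_mul,
          ENNReal.toReal_ofReal (by positivity)]
        rw [← hVdef]
        field_simp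
        ring
      rw [← Filter.tendsto_congr' heq]
      have hcont : Continuous (fun t : ℝ => (3 + 3*t + t^2) * V) := by continuity
      have hc := (hcont.tendsto 0).mono_left (nhdsWithin_le_nhds (s := Set.Ioi (0:ℝ)))
      have h7 : (3 + 3*(0:ℝ) + 0^2) * V = 3 * V := by ring
      rwa [h7] at hc
    exact tendsto_nhds_unique h1 h2
  -- the rescaled volume function and its limit
  set Φ : ℝ → ℝ := fun s => (volume (K + s • L)).toReal with hΦdef
  have hsub : ∀ s : ℝ, K ⊆ K + s • L := by
    intro s x hx
    have h0 : (0 : EuclideanSpace ℝ (Fin 3)) ∈ s • L := by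
      have := Set.smul_mem_smul_set (a := s) (interior_subset hL0)
      rwa [smul_zero] at this
    have := Set.add_mem_add hx h0
    rwa [add_zero] at this
  have hΦge : ∀ s : ℝ, V ≤ Φ s := by
    intro s
    apply ENNReal.toReal_le_toReal hKc.measure_lt_top.ne
      (hKc.add (hLc.smul s)).measure_lt_top.ne |>.mpr
    exact measure_mono (hsub s)
  have hΦpos : ∀ s : ℝ, 0 < Φ s := fun s => lt_of_lt_of_le hVpos (hΦge s)
  have hΦlim : Filter.Tendsto Φ (nhdsWithin 0 (Set.Ioi 0)) (nhds V) := by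
    have h1 := hμ L hLc hLconv hLint
    have h2 : Filter.Tendsto (fun s : ℝ => s * ((Φ s - V) / s)) (nhdsWithin 0 (Set.Ioi 0))
        (nhds (0 * ∫ u : sphere (0 : EuclideanSpace ℝ (Fin 3)) 1, supp L u ∂μ)) :=
      (Filter.tendsto_id.mono_right nhdsWithin_le_nhds).mul h1
    rw [zero_mul] at h2
    have h3 : Filter.Tendsto (fun s : ℝ => Φ s - V) (nhdsWithin 0 (Set.Ioi 0)) (nhds 0) := by
      apply h2.congr'
      filter_upwards [self_mem_nhdsWithin] with s hs
      have hs : (0:ℝ) < s := hs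
      rw [mul_comm, div_mul_cancel₀ _ hs.ne']
    have h4 := h3.add_const V
    simpa using h4
  have hW : Filter.Tendsto (fun t : ℝ => Φ t⁻¹) Filter.atTop (nhds V) :=
    hΦlim.comp tendsto_inv_atTop_nhdsGT_zero
  -- the limit of the second part
  have h4 : Filter.Tendsto (fun t : ℝ => Φ t⁻¹ / V) Filter.atTop (nhds 1) := by
    have := hW.div_const V
    rwa [div_self hVpos.ne'] at this
  have h5 : Filter.Tendsto (fun t : ℝ => Real.log (Φ t⁻¹ / V)) Filter.atTop (nhds 0) := by
    have := (Real.continuousAt_log one_ne_zero).tendsto.comp h4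
    simpa [Function.comp_def] using this
  have term2 : Filter.Tendsto (fun t : ℝ => (V/3) * Real.log (Φ t⁻¹ / V))
      Filter.atTop (nhds 0) := by
    have := h5.const_mul (V/3)
    rwa [mul_zero] at this
  -- the remainder integral
  set g : ℝ → ℝ := fun t => ∫ u : sphere (0 : EuclideanSpace ℝ (Fin 3)) 1,
      Real.log (1 + supp L ↑u / (t * supp K ↑u)) * supp K ↑u ∂μ with hgdef
  have hgcont : ∀ t : ℝ, 0 < t → Continuous
      (fun u : sphere (0 : EuclideanSpace ℝ (Fin 3)) 1 =>
        Real.log (1 + supp L ↑u / (t * supp K ↑u)) * supp K ↑u) := by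
    intro t ht
    apply Continuous.mul _ hcK
    apply Continuous.log
    · exact continuous_const.add (hcL.div (continuous_const.mul hcK)
        (fun u => (mul_pos ht (hKpos u)).ne'))
    · intro u
      have h1 : 0 ≤ supp L ↑u / (t * supp K ↑u) :=
        div_nonneg (hLpos u).le (mul_pos ht (hKpos u)).le
      positivity
  have hgint : ∀ t : ℝ, 0 < t → Integrable
      (fun u : sphere (0 : EuclideanSpace ℝ (Fin 3)) 1 =>
        Real.log (1 + supp L ↑u / (t * supp K ↑u)) * supp K ↑u) μ :=
    fun t ht => (hgcont t ht).integrable_of_hasCompactSupport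
      (HasCompactSupport.of_compactSpace _)
  set C : ℝ := RL * (μ Set.univ).toReal with hCdef
  have hC0 : 0 ≤ C := mul_nonneg hRL0 ENNReal.toReal_nonneg
  have hg0 : ∀ t : ℝ, 0 < t → 0 ≤ g t := by
    intro t ht
    apply integral_nonneg
    intro u
    apply mul_nonneg _ (hKpos u).le
    apply Real.log_nonneg
    have h1 : 0 ≤ supp L ↑u / (t * supp K ↑u) :=
      div_nonneg (hLpos u).le (mul_pos ht (hKpos u)).le
    linarith
  have hgub : ∀ t : ℝ, 0 < t → g t ≤ C / t := by
    intro t ht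
    have hb : ∀ u : sphere (0 : EuclideanSpace ℝ (Fin 3)) 1,
        Real.log (1 + supp L ↑u / (t * supp K ↑u)) * supp K ↑u ≤ RL / t := by
      intro u
      have hx : 0 ≤ supp L ↑u / (t * supp K ↑u) :=
        div_nonneg (hLpos u).le (mul_pos ht (hKpos u)).le
      have hlog : Real.log (1 + supp L ↑u / (t * supp K ↑u)) ≤ supp L ↑u / (t * supp K ↑u) := by
        have := Real.log_le_sub_one_of_pos (by linarith : (0:ℝ) < 1 + supp L ↑u / (t * supp K ↑u))
        linarith
      calc Real.log (1 + supp L ↑u / (t * supp K ↑u)) * supp K ↑u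
          ≤ (supp L ↑u / (t * supp K ↑u)) * supp K ↑u :=
            mul_le_mul_of_nonneg_right hlog (hKpos u).le
      _ = supp L ↑u / t := by
            rw [div_mul_eq_mul_div, mul_comm t (supp K ↑u), mul_comm (supp L ↑u) (supp K ↑u),
              mul_div_mul_left _ _ (hKpos u).ne']
      _ ≤ RL / t := (div_le_div_iff_of_pos_right ht).mpr (hLub u)
    calc g t ≤ ∫ _ : sphere (0 : EuclideanSpace ℝ (Fin 3)) 1, (RL / t) ∂μ :=
          integral_mono (hgint t ht) (integrable_const _) hb
    _ = (μ Set.univ).toReal • (RL / t) := integral_const _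
    _ = C / t := by rw [smul_eq_mul, hCdef]; ring
  -- limit of the remainder integral
  have hCt : Filter.Tendsto (fun t : ℝ => C / t) Filter.atTop (nhds 0) :=
    Filter.Tendsto.div_atTop tendsto_const_nhds Filter.tendsto_id
  have hglim : Filter.Tendsto g Filter.atTop (nhds 0) := by
    apply tendsto_of_tendsto_of_tendsto_of_le_of_le' tendsto_const_nhds hCt
    · filter_upwards [Filter.eventually_gt_atTop 0] with t ht
      exact hg0 t ht
    · filter_upwards [Filter.eventually_gt_atTop 0] with t ht
      exact hgub t ht
  have term1 : Filter.Tendsto (fun t : ℝ => (1/3 : ℝ) * g t) Filter.atTop (nhds 0) := by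
    have := hglim.const_mul (1/3 : ℝ)
    rwa [mul_zero] at this
  -- assemble
  have hfinal : Filter.Tendsto
      (fun t : ℝ => (1/3 : ℝ) * g t - (V/3) * Real.log (Φ t⁻¹ / V))
      Filter.atTop (nhds 0) := by
    have := term1.sub term2
    simpa using this
  apply Filter.Tendsto.congr' _ hfinal
  filter_upwards [Filter.eventually_gt_atTop 0] with t ht
  -- rewrite the integral
  have hA : (∫ u : sphere (0 : EuclideanSpace ℝ (Fin 3)) 1,
      Real.log ((supp L ↑u + t * supp K ↑u) / supp K ↑u) * supp K ↑u ∂μ)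
      = Real.log t * (3 * V) + g t := by
    have hfg : ∀ u : sphere (0 : EuclideanSpace ℝ (Fin 3)) 1,
        Real.log ((supp L ↑u + t * supp K ↑u) / supp K ↑u) * supp K ↑u
        = Real.log t * supp K ↑u
          + Real.log (1 + supp L ↑u / (t * supp K ↑u)) * supp K ↑u := by
      intro u
      have hKu := hKpos u
      have hLu := hLpos u
      have h1 : (supp L ↑u + t * supp K ↑u) / supp K ↑u
          = t * (1 + supp L ↑u / (t * supp K ↑u)) := by
        field_simp
        ring
      have h2 : (0:ℝ) < 1 + supp L ↑u / (t * supp K ↑u) := by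
        have : 0 ≤ supp L ↑u / (t * supp K ↑u) :=
          div_nonneg hLu.le (mul_pos ht hKu).le
        linarith
      rw [h1, Real.log_mul ht.ne' h2.ne']
      ring
    calc (∫ u : sphere (0 : EuclideanSpace ℝ (Fin 3)) 1,
        Real.log ((supp L ↑u + t * supp K ↑u) / supp K ↑u) * supp K ↑u ∂μ)
        = ∫ u : sphere (0 : EuclideanSpace ℝ (Fin 3)) 1,
          (Real.log t * supp K ↑u
            + Real.log (1 + supp L ↑u / (t * supp K ↑u)) * supp K ↑u) ∂μ := by
          exact integral_congr_ae (Filter.Eventually.of_forall hfg)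
    _ = Real.log t * (∫ u : sphere (0 : EuclideanSpace ℝ (Fin 3)) 1, supp K ↑u ∂μ) + g t := by
          rw [integral_add (hintK.const_mul _) (hgint t ht), integral_const_mul]
    _ = Real.log t * (3 * V) + g t := by rw [hIK]
  -- rewrite the volume term
  have hvol : (volume (L + t • K)).toReal = t^3 * Φ t⁻¹ := by
    have hset : L + t • K = t • (K + t⁻¹ • L) := by
      rw [smul_add, smul_smul, mul_inv_cancel₀ ht.ne', one_smul, add_comm]
    rw [hset, Measure.addHaar_smul, finrank_euclideanSpace_fin, abs_pow,
      abs_of_pos ht, ENNReal.toReal_mul, ENNReal.toReal_ofReal (by positivity)]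
  have hB : V * Real.log (((volume (L + t • K)).toReal / V) ^ ((1:ℝ)/3))
      = V * Real.log t + (V/3) * Real.log (Φ t⁻¹ / V) := by
    have hΦt := hΦpos t⁻¹
    rw [hvol]
    rw [Real.log_rpow (by positivity : (0:ℝ) < t^3 * Φ t⁻¹ / V)]
    have h6 : t^3 * Φ t⁻¹ / V = t^3 * (Φ t⁻¹ / V) := by ring
    rw [h6, Real.log_mul (by positivity) (by positivity), Real.log_pow]
    push_cast
    ring
  rw [hA, hB]
  ring
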